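/- Let μ be a probability measure on ℝ with finite first moment, mean m_μ, and upper support endpoint r_μ. Define the Hardy–Littlewood transform μ^HL as the law of AVaR_μ(ξ) for ξ uniform on [0,1]. Then for every y ∈ (m_μ, r_μ), μ^HL([y,∞)) = inf_{z > 0} C_μ(y − z)/z. -/

import Mathlib

open MeasureTheory Set Filter Topology

/-- Tail function `μ([x,∞))`. -/
noncomputable def tailFn (μ : Measure ℝ) (x : ℝ) : ℝ := (μ (Ici x)).toReal

/-- Tail quantile function: left-continuous inverse of the tail function. -/
noncomputable def tailQ (μ : Measure ℝ) (l : ℝ) : ℝ := sInf {x : ℝ | tailFn μ x < l}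

/-- Call function `C_μ(K) = ∫ (s-K)⁺ μ(ds)`. -/
noncomputable def callFn (μ : Measure ℝ) (K : ℝ) : ℝ := ∫ s, max (s - K) 0 ∂μ

/-- Average Value at Risk at level `l`. -/
noncomputable def avar (μ : Measure ℝ) (l : ℝ) : ℝ := (1 / l) * ∫ u in (0 : ℝ)..l, tailQ μ u

/-- Hardy–Littlewood transform of `μ`: the law of `AVaR_μ(ξ)` for `ξ` uniform on `[0,1]`. -/
noncomputable def hlTransform (μ : Measure ℝ) : Measure ℝ :=
  Measure.map (avar μ) (volume.restrict (Ioc (0 : ℝ) 1))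

section aux

variable (μ : Measure ℝ) [IsProbabilityMeasure μ]

lemma tailFn_anti : Antitone (tailFn μ) := fun a b hab =>
  (ENNReal.toReal_le_toReal (measure_ne_top μ _) (measure_ne_top μ _)).mpr
    (measure_mono (Ici_subset_Ici.mpr hab))

lemma exists_tailFn_lt {u : ℝ} (hu : 0 < u) : ∃ x : ℝ, tailFn μ x < u := by
  have hIci : ⋂ n : ℕ, Ici ((n : ℝ)) = (∅ : Set ℝ) := by
    ext x
    simp only [mem_iInter, mem_Ici, mem_empty_iff_false, iff_false, not_forall, not_le]
    obtain ⟨n, hn⟩ := exists_nat_gt x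
    exact ⟨n, hn⟩
  have h : Tendsto (fun n : ℕ => μ (Ici ((n : ℝ)))) atTop (𝓝 0) := by
    have := tendsto_measure_iInter_atTop (μ := μ) (s := fun n : ℕ => Ici ((n : ℝ)))
      (fun n => measurableSet_Ici.nullMeasurableSet)
      (fun m n hmn => Ici_subset_Ici.mpr (by exact_mod_cast hmn))
      ⟨0, measure_ne_top μ _⟩
    rwa [hIci, measure_empty] at this
  have hev := h.eventually_lt_const (ENNReal.ofReal_pos.mpr hu)
  obtain ⟨n, hn⟩ := hev.exists
  exact ⟨n, ENNReal.toReal_lt_of_lt_ofReal hn⟩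

lemma exists_lt_tailFn {u : ℝ} (h0 : 0 ≤ u) (hu : u < 1) : ∃ x : ℝ, u < tailFn μ x := by
  have hIci : ⋃ n : ℕ, Ici (-(n : ℝ)) = (univ : Set ℝ) := by
    ext x
    simp only [mem_iUnion, mem_Ici, mem_univ, iff_true]
    obtain ⟨n, hn⟩ := exists_nat_gt (-x)
    exact ⟨n, by linarith⟩
  have h : Tendsto (fun n : ℕ => μ (Ici (-(n : ℝ)))) atTop (𝓝 1) := by
    have := tendsto_measure_iUnion_atTop (μ := μ) (s := fun n : ℕ => Ici (-(n : ℝ)))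
      (fun m n hmn => Ici_subset_Ici.mpr (by simp; exact_mod_cast hmn))
    rwa [hIci, measure_univ] at this
  have hev := h.eventually_const_lt (show ENNReal.ofReal u < 1 from ENNReal.ofReal_lt_one.mpr hu)
  obtain ⟨n, hn⟩ := hev.exists
  refine ⟨-(n : ℝ), ?_⟩
  have := (ENNReal.toReal_lt_toReal ENNReal.ofReal_ne_top (measure_ne_top μ _)).mpr hn
  rwa [ENNReal.toReal_ofReal h0] at this

lemma tail_set_nonempty {u : ℝ} (hu : 0 < u) : {x : ℝ | tailFn μ x < u}.Nonempty :=
  exists_tailFn_lt μ hu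

lemma tail_set_bddBelow {u : ℝ} (h0 : 0 ≤ u) (hu : u < 1) :
    BddBelow {x : ℝ | tailFn μ x < u} := by
  obtain ⟨x₀, hx₀⟩ := exists_lt_tailFn μ h0 hu
  refine ⟨x₀, fun x hx => ?_⟩
  by_contra hlt
  push_neg at hlt
  exact absurd (lt_of_lt_of_le hx₀ (tailFn_anti μ hlt.le)) (not_lt.mpr hx.le)

lemma le_tailQ {u x : ℝ} (hu : 0 < u) (hux : u ≤ tailFn μ x) : x ≤ tailQ μ u := by
  refine le_csInf (tail_set_nonempty μ hu) (fun b hb => ?_)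
  by_contra hbx
  push_neg at hbx
  exact absurd (hux.trans (tailFn_anti μ hbx.le)) (not_le.mpr hb)

lemma tailQ_lt {u x : ℝ} (hu : 0 < u) (hu1 : u < 1) (hx : tailFn μ x < u) :
    tailQ μ u < x := by
  have hIci : ⋂ n : ℕ, Ici (x - 1 / ((n : ℝ) + 1)) = Ici x := by
    ext t
    simp only [mem_iInter, mem_Ici]
    constructor
    · intro h
      by_contra hlt
      push_neg at hlt
      obtain ⟨n, hn⟩ := exists_nat_one_div_lt (sub_pos.mpr hlt)
      have := h n
      linarith
    · intro h n
      have h1 : (0:ℝ) < 1 / ((n : ℝ) + 1) := by positivity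
      linarith
  have h : Tendsto (fun n : ℕ => μ (Ici (x - 1 / ((n : ℝ) + 1)))) atTop (𝓝 (μ (Ici x))) := by
    have := tendsto_measure_iInter_atTop (μ := μ)
      (s := fun n : ℕ => Ici (x - 1 / ((n : ℝ) + 1)))
      (fun n => measurableSet_Ici.nullMeasurableSet)
      (fun m n hmn => Ici_subset_Ici.mpr (by
        have : 1 / ((n : ℝ) + 1) ≤ 1 / ((m : ℝ) + 1) := by
          apply one_div_le_one_div_of_le (by positivity)
          have := (Nat.cast_le (α := ℝ)).mpr hmn
          linarith
        linarith))
      ⟨0, measure_ne_top μ _⟩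
    rwa [hIci] at this
  have hlt : μ (Ici x) < ENNReal.ofReal u :=
    (ENNReal.lt_ofReal_iff_toReal_lt (measure_ne_top μ _)).mpr hx
  obtain ⟨n, hn⟩ := (h.eventually_lt_const hlt).exists
  have hmem : x - 1 / ((n : ℝ) + 1) ∈ {x : ℝ | tailFn μ x < u} :=
    ENNReal.toReal_lt_of_lt_ofReal hn
  have := csInf_le (tail_set_bddBelow μ hu.le hu1) hmem
  have h1 : (0:ℝ) < 1 / ((n : ℝ) + 1) := by positivity
  calc tailQ μ u ≤ x - 1 / ((n : ℝ) + 1) := this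
    _ < x := by linarith

lemma le_tailQ_iff {u x : ℝ} (hu : 0 < u) (hu1 : u < 1) :
    x ≤ tailQ μ u ↔ u ≤ tailFn μ x := by
  constructor
  · intro h
    by_contra hlt
    push_neg at hlt
    exact absurd (tailQ_lt μ hu hu1 hlt) (not_lt.mpr h)
  · exact le_tailQ μ hu

lemma tailQ_antitoneOn : AntitoneOn (tailQ μ) (Ioo 0 1) := by
  intro a ha b hb hab
  exact csInf_le_csInf (tail_set_bddBelow μ hb.1.le hb.2) (tail_set_nonempty μ ha.1)
    (fun x hx => lt_of_lt_of_le hx hab)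

lemma tailQ_aemeasurable : AEMeasurable (tailQ μ) (volume.restrict (Ioo 0 1)) :=
  aemeasurable_restrict_of_antitoneOn measurableSet_Ioo (tailQ_antitoneOn μ)

instance : IsProbabilityMeasure (volume.restrict (Ioo (0:ℝ) 1)) :=
  ⟨by simp [Real.volume_Ioo]⟩

lemma map_tailQ : Measure.map (tailQ μ) (volume.restrict (Ioo (0:ℝ) 1)) = μ := by
  haveI : IsProbabilityMeasure
      (Measure.map (tailQ μ) (volume.restrict (Ioo (0:ℝ) 1))) :=
    Measure.isProbabilityMeasure_map (tailQ_aemeasurable μ)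
  refine Measure.ext_of_Ici _ _ (fun a => ?_)
  rw [Measure.map_apply_of_aemeasurable (tailQ_aemeasurable μ) measurableSet_Ici,
    Measure.restrict_apply' measurableSet_Ioo]
  set t := tailFn μ a with ht
  have ht0 : 0 ≤ t := ENNReal.toReal_nonneg
  have ht1 : t ≤ 1 := by
    rw [ht, tailFn]
    have hle : μ (Ici a) ≤ 1 := prob_le_one
    exact ENNReal.toReal_le_of_le_ofReal one_pos.le (by simpa using hle)
  have hset1 : Ioo (0:ℝ) t ⊆ tailQ μ ⁻¹' Ici a ∩ Ioo 0 1 := by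
    intro u hu
    have hu1 : u < 1 := lt_of_lt_of_le hu.2 ht1
    refine ⟨?_, hu.1, hu1⟩
    exact le_tailQ μ hu.1 (le_of_lt hu.2)
  have hset2 : tailQ μ ⁻¹' Ici a ∩ Ioo 0 1 ⊆ Ioc (0:ℝ) t := by
    rintro u ⟨hu, hu0, hu1⟩
    exact ⟨hu0, (le_tailQ_iff μ hu0 hu1).mp hu⟩
  have h1 : ENNReal.ofReal t ≤ volume (tailQ μ ⁻¹' Ici a ∩ Ioo 0 1) := by
    have : volume (Ioo (0:ℝ) t) ≤ volume (tailQ μ ⁻¹' Ici a ∩ Ioo 0 1) := measure_mono hset1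
    rwa [Real.volume_Ioo, sub_zero] at this
  have h2 : volume (tailQ μ ⁻¹' Ici a ∩ Ioo 0 1) ≤ ENNReal.ofReal t := by
    have : volume (tailQ μ ⁻¹' Ici a ∩ Ioo 0 1) ≤ volume (Ioc (0:ℝ) t) := measure_mono hset2
    rwa [Real.volume_Ioc, sub_zero] at this
  rw [le_antisymm h2 h1, ht, tailFn, ENNReal.ofReal_toReal (measure_ne_top μ _)]

end aux

/-- Primitive of the tail quantile function. -/
noncomputable def primQ (μ : Measure ℝ) (l : ℝ) : ℝ := ∫ t in Ioc (0:ℝ) l, tailQ μ t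

section aux2

variable (μ : Measure ℝ) [IsProbabilityMeasure μ]

lemma integrableOn_tailQ (hμ : Integrable id μ) :
    IntegrableOn (tailQ μ) (Ioo (0:ℝ) 1) volume := by
  rw [← map_tailQ μ] at hμ
  exact (integrable_map_measure aestronglyMeasurable_id (tailQ_aemeasurable μ)).mp hμ

lemma continuousOn_primQ (hμ : Integrable id μ) :
    ContinuousOn (primQ μ) (Icc (0:ℝ) 1) :=
  intervalIntegral.continuousOn_primitive
    ((integrableOn_tailQ μ hμ).congr_set_ae Ioo_ae_eq_Icc.symm)

lemma primQ_one (hμ : Integrable id μ) : primQ μ 1 = ∫ s, s ∂μ := by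
  have h1 : primQ μ 1 = ∫ t in Ioo (0:ℝ) 1, tailQ μ t :=
    setIntegral_congr_set (Ioo_ae_eq_Ioc (μ := volume) (a := (0:ℝ)) (b := 1)).symm
  rw [h1]
  have h2 : ∫ s, s ∂μ = ∫ t in Ioo (0:ℝ) 1, tailQ μ t := by
    conv_lhs => rw [← map_tailQ μ]
    exact integral_map (tailQ_aemeasurable μ) aestronglyMeasurable_id
  rw [h2]

end aux2

section aux3

variable (μ : Measure ℝ) [IsProbabilityMeasure μ]

lemma callFn_eq (K : ℝ) :
    callFn μ K = ∫ u in Ioo (0:ℝ) 1, max (tailQ μ u - K) 0 := by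
  rw [callFn]
  conv_lhs => rw [← map_tailQ μ]
  exact integral_map (tailQ_aemeasurable μ)
    (((continuous_id.sub continuous_const).max continuous_const).aestronglyMeasurable)

lemma lower_aux (hint : IntegrableOn (tailQ μ) (Ioo (0:ℝ) 1) volume)
    {a : ℝ} (ha : a ∈ Ioo (0:ℝ) 1) : a * tailQ μ a ≤ primQ μ a := by
  have hsub : Ioc (0:ℝ) a ⊆ Ioo (0:ℝ) 1 := fun u hu => ⟨hu.1, lt_of_le_of_lt hu.2 ha.2⟩
  have hmono := setIntegral_mono_on (μ := volume) (s := Ioc (0:ℝ) a)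
    (integrable_const (tailQ μ a)) (hint.mono_set hsub) measurableSet_Ioc
    (fun u hu => tailQ_antitoneOn μ ⟨hu.1, lt_of_le_of_lt hu.2 ha.2⟩ ha hu.2)
  rwa [setIntegral_const, measureReal_def, Real.volume_Ioc, sub_zero, ENNReal.toReal_ofReal ha.1.le,
    smul_eq_mul] at hmono

lemma avar_anti_aux (hint : IntegrableOn (tailQ μ) (Ioo (0:ℝ) 1) volume)
    {a b : ℝ} (ha : 0 < a) (hab : a ≤ b) (hb : b < 1) :
    a * primQ μ b ≤ b * primQ μ a := by
  have hsub1 : Ioc (0:ℝ) a ⊆ Ioo (0:ℝ) 1 := fun u hu => ⟨hu.1, lt_of_le_of_lt hu.2 (lt_of_le_of_lt hab hb)⟩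
  have hsub2 : Ioc a b ⊆ Ioo (0:ℝ) 1 := fun u hu => ⟨lt_trans ha hu.1, lt_of_le_of_lt hu.2 hb⟩
  have hsplit : primQ μ b = primQ μ a + ∫ u in Ioc a b, tailQ μ u := by
    rw [primQ, primQ, ← setIntegral_union (Ioc_disjoint_Ioc_of_le le_rfl) measurableSet_Ioc
      (hint.mono_set hsub1) (hint.mono_set hsub2), Ioc_union_Ioc_eq_Ioc ha.le hab]
  have hbound : ∫ u in Ioc a b, tailQ μ u ≤ (b - a) * tailQ μ a := by
    have hmono := setIntegral_mono_on (μ := volume) (s := Ioc a b)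
      (hint.mono_set hsub2) (integrable_const (tailQ μ a)) measurableSet_Ioc
      (fun u hu => tailQ_antitoneOn μ ⟨ha, lt_of_le_of_lt hab hb⟩ (hsub2 hu) hu.1.le)
    rwa [setIntegral_const, measureReal_def, Real.volume_Ioc, ENNReal.toReal_ofReal (sub_nonneg.mpr hab),
      smul_eq_mul] at hmono
  have hkey := lower_aux μ hint (a := a) ⟨ha, lt_of_le_of_lt hab hb⟩
  have h1 : a * ∫ u in Ioc a b, tailQ μ u ≤ a * ((b - a) * tailQ μ a) :=
    mul_le_mul_of_nonneg_left hbound ha.le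
  have h2 : (b - a) * (a * tailQ μ a) ≤ (b - a) * primQ μ a :=
    mul_le_mul_of_nonneg_left hkey (sub_nonneg.mpr hab)
  nlinarith [hsplit]

end aux3
theorem stmt_7 (μ : Measure ℝ) [IsProbabilityMeasure μ] (hμ : Integrable id μ) :
    ∀ y : ℝ, (∫ s, s ∂μ) < y → 0 < μ (Ioi y) →
      (hlTransform μ (Ici y)).toReal = ⨅ z : Ioi (0 : ℝ), callFn μ (y - (z : ℝ)) / (z : ℝ) := by
  intro y hy hpos
  have hint := integrableOn_tailQ μ hμ
  have hΦcont := continuousOn_primQ μ hμ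
  -- a point y' > y with positive tail
  obtain ⟨y', hyy', hy'pos⟩ : ∃ y' : ℝ, y < y' ∧ 0 < tailFn μ y' := by
    by_contra hcon
    push_neg at hcon
    have hnull : ∀ n : ℕ, μ (Ici (y + 1 / ((n:ℝ) + 1))) = 0 := by
      intro n
      have h1 : (0:ℝ) < 1 / ((n:ℝ) + 1) := by positivity
      have h2 := hcon (y + 1 / ((n:ℝ) + 1)) (by linarith)
      have h3 : tailFn μ (y + 1 / ((n:ℝ) + 1)) = 0 := le_antisymm h2 ENNReal.toReal_nonneg
      have h4 := (ENNReal.toReal_eq_zero_iff _).mp h3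
      rcases h4 with h4 | h4
      · exact h4
      · exact absurd h4 (measure_ne_top μ _)
    have hU : Ioi y ⊆ ⋃ n : ℕ, Ici (y + 1 / ((n:ℝ) + 1)) := by
      intro x hx
      obtain ⟨n, hn⟩ := exists_nat_one_div_lt (show (0:ℝ) < x - y from sub_pos.mpr hx)
      exact mem_iUnion.mpr ⟨n, by simp only [mem_Ici]; linarith⟩
    have hle : μ (Ioi y) ≤ 0 := le_trans (measure_mono hU) (le_of_eq (measure_iUnion_null hnull))
    exact absurd (le_antisymm hle zero_le) (ne_of_gt hpos)
  set δ : ℝ := min (tailFn μ y') (1/2) with hδdef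
  have hδpos : 0 < δ := lt_min hy'pos (by norm_num)
  have hδlt1 : δ < 1 := lt_of_le_of_lt (min_le_right _ _) (by norm_num)
  have hδle : δ ≤ tailFn μ y' := min_le_left _ _
  have hlow : ∀ u ∈ Ioc (0:ℝ) δ, y' ≤ tailQ μ u := fun u hu =>
    le_tailQ μ hu.1 (hu.2.trans hδle)
  have hsubδ : Ioc (0:ℝ) δ ⊆ Ioo (0:ℝ) 1 := fun u hu => ⟨hu.1, lt_of_le_of_lt hu.2 hδlt1⟩
  have hD' : δ * y' ≤ primQ μ δ := by
    have hmono := setIntegral_mono_on (μ := volume) (s := Ioc (0:ℝ) δ)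
      (integrable_const y') (hint.mono_set hsubδ) measurableSet_Ioc (fun u hu => hlow u hu)
    rwa [setIntegral_const, measureReal_def, Real.volume_Ioc, sub_zero, ENNReal.toReal_ofReal hδpos.le,
      smul_eq_mul] at hmono
  set S : Set ℝ := {l : ℝ | l ∈ Ioc (0:ℝ) 1 ∧ y * l ≤ primQ μ l} with hSdef
  have hδS : δ ∈ S := ⟨⟨hδpos, hδlt1.le⟩, by nlinarith⟩
  have hSne : S.Nonempty := ⟨δ, hδS⟩
  have hSbdd : BddAbove S := ⟨1, fun l hl => hl.1.2⟩
  set lam : ℝ := sSup S with hlamdef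
  have hlam_ge : δ ≤ lam := le_csSup hSbdd hδS
  have hlam0 : 0 < lam := lt_of_lt_of_le hδpos hlam_ge
  have hlam1 : lam ≤ 1 := csSup_le hSne (fun l hl => hl.1.2)
  -- `y * lam ≤ primQ μ lam` by closedness
  have hlamF : y * lam ≤ primQ μ lam := by
    have hC'closed : IsClosed (Icc (0:ℝ) 1 ∩ (fun l => primQ μ l - y * l) ⁻¹' Ici 0) := by
      refine ContinuousOn.preimage_isClosed_of_isClosed ?_ isClosed_Icc isClosed_Ici
      exact hΦcont.sub ((continuous_const.mul continuous_id).continuousOn)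
    have hSC : S ⊆ Icc (0:ℝ) 1 ∩ (fun l => primQ μ l - y * l) ⁻¹' Ici 0 := by
      rintro l ⟨hl1, hl2⟩
      exact ⟨Ioc_subset_Icc_self hl1, by simp only [mem_preimage, mem_Ici]; linarith⟩
    have hmem := (hC'closed.closure_subset_iff.mpr hSC) (csSup_mem_closure hSne hSbdd)
    have := hmem.2
    simp only [mem_preimage, mem_Ici] at this
    linarith
  have hlam_lt1 : lam < 1 := by
    rcases lt_or_eq_of_le hlam1 with h | h
    · exact h
    · exfalso
      rw [h] at hlamF
      rw [primQ_one μ hμ] at hlamF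
      linarith
  have hsubL : Ioc (0:ℝ) lam ⊆ Ioo (0:ℝ) 1 := fun u hu => ⟨hu.1, lt_of_le_of_lt hu.2 hlam_lt1⟩
  -- every `u ≤ lam` is in `S`
  have hJ : ∀ u : ℝ, 0 < u → u ≤ lam → y * u ≤ primQ μ u := by
    intro u hu hule
    rcases eq_or_lt_of_le hule with h | h
    · rw [h]; exact hlamF
    · obtain ⟨b, hbS, hub⟩ := exists_lt_of_lt_csSup hSne h
      have hb1 : b < 1 := lt_of_le_of_lt (le_csSup hSbdd hbS) hlam_lt1
      have hanti := avar_anti_aux μ hint hu hub.le hb1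
      have hbS2 := hbS.2
      have hb0 := hbS.1.1
      nlinarith
  have hK : ∀ u : ℝ, lam < u → u ≤ 1 → primQ μ u < y * u := by
    intro u h1 h2
    by_contra hc
    push_neg at hc
    exact absurd (le_csSup hSbdd ⟨⟨lt_trans hlam0 h1, h2⟩, hc⟩) (not_le.mpr h1)
  -- exact equation at `lam`
  have hEq : primQ μ lam = y * lam := by
    refine le_antisymm ?_ hlamF
    set t : ℕ → ℝ := fun n => lam + (1 - lam) / ((n:ℝ) + 1) with htdef
    have htmem : ∀ n : ℕ, t n ∈ Ioc lam 1 := by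
      intro n
      have h1 : (0:ℝ) < (1 - lam) / ((n:ℝ) + 1) := by
        apply div_pos (by linarith) (by positivity)
      have h2 : (1 - lam) / ((n:ℝ) + 1) ≤ 1 - lam := by
        apply div_le_self (by linarith)
        have : (0:ℝ) ≤ (n:ℝ) := Nat.cast_nonneg n
        linarith
      constructor
      · simp only [htdef]; linarith
      · simp only [htdef]; linarith
    have htt : Tendsto t atTop (𝓝 lam) := by
      have h0 : Tendsto (fun n : ℕ => (1 - lam) * (1 / ((n:ℝ) + 1))) atTop (𝓝 ((1 - lam) * 0)) :=
        tendsto_one_div_add_atTop_nhds_zero_nat.const_mul (1 - lam)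
      have h1 : Tendsto (fun n : ℕ => (1 - lam) / ((n:ℝ) + 1)) atTop (𝓝 0) := by
        simpa [div_eq_mul_inv] using h0
      have := h1.const_add lam
      simpa using this
    have hca : ContinuousAt (primQ μ) lam :=
      hΦcont.continuousAt (Icc_mem_nhds hlam0 hlam_lt1)
    have hΦt : Tendsto (fun n => primQ μ (t n)) atTop (𝓝 (primQ μ lam)) := hca.tendsto.comp htt
    have hyt : Tendsto (fun n => y * t n) atTop (𝓝 (y * lam)) := htt.const_mul y
    exact le_of_tendsto_of_tendsto hΦt hyt
      (Eventually.of_forall fun n => (hK (t n) (htmem n).1 (htmem n).2).le)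
  -- the optimal strike is below `y`
  have hM : tailQ μ lam < y := by
    by_contra hge
    push_neg at hge
    rcases eq_or_lt_of_le hlam_ge with hcase | hcase
    · rw [hcase] at hD'
      nlinarith
    · have hsubB : Ioc δ lam ⊆ Ioo (0:ℝ) 1 :=
        fun u hu => ⟨lt_trans hδpos hu.1, lt_of_le_of_lt hu.2 hlam_lt1⟩
      have hsplit : primQ μ lam = primQ μ δ + ∫ u in Ioc δ lam, tailQ μ u := by
        have h := setIntegral_union (μ := volume) (f := tailQ μ) (Ioc_disjoint_Ioc_of_le le_rfl)
          measurableSet_Ioc (hint.mono_set hsubδ) (hint.mono_set hsubB)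
        rw [Ioc_union_Ioc_eq_Ioc hδpos.le hcase.le] at h
        exact h
      have hB : (lam - δ) * y ≤ ∫ u in Ioc δ lam, tailQ μ u := by
        have hmono := setIntegral_mono_on (μ := volume) (s := Ioc δ lam)
          (integrable_const y) (hint.mono_set hsubB) measurableSet_Ioc
          (fun u hu => le_trans hge (tailQ_antitoneOn μ (hsubB hu) ⟨hlam0, hlam_lt1⟩ hu.2))
        rwa [setIntegral_const, measureReal_def, Real.volume_Ioc,
          ENNReal.toReal_ofReal (sub_nonneg.mpr hcase.le), smul_eq_mul] at hmono
      nlinarith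
  set zs : ℝ := y - tailQ μ lam with hzsdef
  have hzs : 0 < zs := sub_pos.mpr hM
  -- LHS equals lam
  have hres : volume.restrict (Ioc (0:ℝ) 1) = volume.restrict (Ioo (0:ℝ) 1) :=
    Measure.restrict_congr_set (Ioo_ae_eq_Ioc (μ := volume)).symm
  have havat : ∀ l ∈ Ioo (0:ℝ) 1, avar μ l = (1 / l) * primQ μ l := by
    intro l hl
    rw [avar, intervalIntegral.integral_of_le hl.1.le]
    rfl
  have hg : ContinuousOn (fun l => (1 / l) * primQ μ l) (Ioo (0:ℝ) 1) := by
    refine ContinuousOn.mul ?_ (hΦcont.mono Ioo_subset_Icc_self)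
    exact continuousOn_const.div continuousOn_id (fun x hx => ne_of_gt hx.1)
  have havar_aemeas : AEMeasurable (avar μ) (volume.restrict (Ioo (0:ℝ) 1)) := by
    refine (hg.aemeasurable measurableSet_Ioo).congr ?_
    exact (ae_restrict_iff' measurableSet_Ioo).mpr
      (Eventually.of_forall fun l hl => (havat l hl).symm)
  have hsetEq : avar μ ⁻¹' Ici y ∩ Ioo (0:ℝ) 1 = Ioc (0:ℝ) lam := by
    ext l
    constructor
    · rintro ⟨hl1, hl2⟩
      simp only [mem_preimage, mem_Ici] at hl1
      rw [havat l hl2, one_div_mul_eq_div] at hl1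
      have h' : y * l ≤ primQ μ l := by
        have := (le_div_iff₀ hl2.1).mp hl1
        linarith
      exact ⟨hl2.1, le_csSup hSbdd ⟨⟨hl2.1, hl2.2.le⟩, h'⟩⟩
    · intro hl
      have hIoo : l ∈ Ioo (0:ℝ) 1 := hsubL hl
      refine ⟨?_, hIoo⟩
      simp only [mem_preimage, mem_Ici]
      rw [havat l hIoo, one_div_mul_eq_div]
      exact (le_div_iff₀ hl.1).mpr (hJ l hl.1 hl.2)
  have hLHS : (hlTransform μ (Ici y)).toReal = lam := by
    rw [hlTransform, hres, Measure.map_apply_of_aemeasurable havar_aemeas measurableSet_Ici,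
      Measure.restrict_apply' measurableSet_Ioo, hsetEq, Real.volume_Ioc, sub_zero,
      ENNReal.toReal_ofReal hlam0.le]
  -- lower bound for all z > 0
  have hlower : ∀ z : ℝ, 0 < z → lam ≤ callFn μ (y - z) / z := by
    intro z hz
    rw [le_div_iff₀ hz]
    rw [callFn_eq μ]
    have hgint : IntegrableOn (fun u => max (tailQ μ u - (y - z)) 0) (Ioo (0:ℝ) 1) volume :=
      (hint.sub (integrable_const _)).pos_part
    have step1 : (∫ u in Ioc (0:ℝ) lam, max (tailQ μ u - (y - z)) 0)
        ≤ ∫ u in Ioo (0:ℝ) 1, max (tailQ μ u - (y - z)) 0 :=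
      setIntegral_mono_set hgint (ae_of_all _ fun u => le_max_right _ _)
        (HasSubset.Subset.eventuallyLE hsubL)
    have step2 : (∫ u in Ioc (0:ℝ) lam, (tailQ μ u - (y - z)))
        ≤ ∫ u in Ioc (0:ℝ) lam, max (tailQ μ u - (y - z)) 0 :=
      setIntegral_mono_on ((hint.mono_set hsubL).sub (integrable_const _))
        (hgint.mono_set hsubL) measurableSet_Ioc (fun u _ => le_max_left _ _)
    have step3 : (∫ u in Ioc (0:ℝ) lam, (tailQ μ u - (y - z)))
        = primQ μ lam - (y - z) * lam := by
      rw [integral_sub (hint.mono_set hsubL) (integrable_const _), setIntegral_const, measureReal_def,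
        Real.volume_Ioc, sub_zero, ENNReal.toReal_ofReal hlam0.le, smul_eq_mul, primQ]
      ring
    have : lam * z = primQ μ lam - (y - z) * lam := by rw [hEq]; ring
    rw [this, ← step3]
    exact le_trans step2 step1
  -- the optimal z
  have hupper : callFn μ (y - zs) / zs = lam := by
    have hyz : y - zs = tailQ μ lam := by rw [hzsdef]; ring
    rw [hyz, callFn_eq μ]
    have hgint : IntegrableOn (fun u => max (tailQ μ u - tailQ μ lam) 0) (Ioo (0:ℝ) 1) volume :=
      (hint.sub (integrable_const _)).pos_part
    have hsubB : Ioo lam 1 ⊆ Ioo (0:ℝ) 1 := fun u hu => ⟨lt_trans hlam0 hu.1, hu.2⟩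
    have hdisj : Disjoint (Ioc (0:ℝ) lam) (Ioo lam 1) := by
      rw [Set.disjoint_left]
      rintro u hu hu'
      exact absurd hu.2 (not_le.mpr hu'.1)
    have hsplit := setIntegral_union (μ := volume)
      (f := fun u => max (tailQ μ u - tailQ μ lam) 0) hdisj measurableSet_Ioo
      (hgint.mono_set hsubL) (hgint.mono_set hsubB)
    rw [Ioc_union_Ioo_eq_Ioo hlam0.le hlam_lt1] at hsplit
    have hzero : (∫ u in Ioo lam 1, max (tailQ μ u - tailQ μ lam) 0) = 0 := by
      rw [setIntegral_congr_fun measurableSet_Ioo (g := fun _ => (0:ℝ))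
        (fun u hu => by
          have h1 : tailQ μ u ≤ tailQ μ lam :=
            tailQ_antitoneOn μ ⟨hlam0, hlam_lt1⟩ (hsubB hu) hu.1.le
          simp [max_eq_right, sub_nonpos.mpr h1])]
      simp
    have hfirst : (∫ u in Ioc (0:ℝ) lam, max (tailQ μ u - tailQ μ lam) 0)
        = primQ μ lam - tailQ μ lam * lam := by
      rw [setIntegral_congr_fun measurableSet_Ioc (g := fun u => tailQ μ u - tailQ μ lam)
        (fun u hu => max_eq_left (sub_nonneg.mpr
          (tailQ_antitoneOn μ (hsubL hu) ⟨hlam0, hlam_lt1⟩ hu.2)))]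
      rw [integral_sub (hint.mono_set hsubL) (integrable_const _), setIntegral_const, measureReal_def,
        Real.volume_Ioc, sub_zero, ENNReal.toReal_ofReal hlam0.le, smul_eq_mul, primQ]
      ring
    rw [hsplit, hzero, hfirst, add_zero, hEq]
    field_simp
    ring
  -- conclusion
  rw [hLHS]
  have hbdd : BddBelow (Set.range fun z : Ioi (0:ℝ) => callFn μ (y - (z : ℝ)) / (z : ℝ)) := by
    refine ⟨lam, ?_⟩
    rintro _ ⟨z, rfl⟩
    exact hlower z z.2
  refine le_antisymm (le_ciInf fun z => hlower z z.2) ?_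
  exact ciInf_le_of_le hbdd ⟨zs, hzs⟩ (le_of_eq hupper)
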